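/- Validity of axiom A10: for every agent i ∈ Agt and every formula φ of L, the formula RA(i)φ → Box(i)(φ → rew(i)) is valid, i.e., true in every model (S,U). -/

import Mathlib

/-- The language L0 of explicit belief: atoms, negation, conjunction, explicit belief. -/
inductive L0 (Agt Atm : Type) : Type
  | atom : Atm → L0 Agt Atm
  | neg  : L0 Agt Atm → L0 Agt Atm
  | and  : L0 Agt Atm → L0 Agt Atm → L0 Agt Atm
  | bel  : Agt → L0 Agt Atm → L0 Agt Atm

/-- Material implication in L0, as the usual abbreviation. -/
def L0.impl {Agt Atm : Type} (a b : L0 Agt Atm) : L0 Agt Atm := .neg (.and a (.neg b))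

/-- A state: a belief base for each agent together with a valuation. -/
structure State (Agt Atm : Type) where
  base : Agt → Set (L0 Agt Atm)
  val  : Set Atm

/-- Satisfaction of an L0 formula at a state. -/
def sat0 {Agt Atm : Type} (S : State Agt Atm) : L0 Agt Atm → Prop
  | .atom p  => p ∈ S.val
  | .neg a   => ¬ sat0 S a
  | .and a b => sat0 S a ∧ sat0 S b
  | .bel i a => a ∈ S.base i

/-- Epistemic relation R(i): S' satisfies every formula in agent i's belief base at S. -/
def epi {Agt Atm : Type} (i : Agt) (S S' : State Agt Atm) : Prop :=
  ∀ a ∈ S.base i, sat0 S' a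

/-- Attraction relation A(i): S' satisfies some α with (α → rew i) in agent i's belief base. -/
def attr {Agt Atm : Type} (rew : Agt → Atm) (i : Agt) (S S' : State Agt Atm) : Prop :=
  ∃ a : L0 Agt Atm, (L0.impl a (.atom (rew i))) ∈ S.base i ∧ sat0 S' a

/-- Repulsion relation P(i): S' satisfies some α with (α → pun i) in agent i's belief base. -/
def repu {Agt Atm : Type} (pun : Agt → Atm) (i : Agt) (S S' : State Agt Atm) : Prop :=
  ∃ a : L0 Agt Atm, (L0.impl a (.atom (pun i))) ∈ S.base i ∧ sat0 S' a

/-- The language L: L0 formulas, Boolean connectives, implicit belief `box`,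
complete attraction `ca`, complete repulsion `cr`, realistic attraction `ra`,
realistic repulsion `rr`. -/
inductive Formula (Agt Atm : Type) : Type
  | emb : L0 Agt Atm → Formula Agt Atm
  | neg : Formula Agt Atm → Formula Agt Atm
  | and : Formula Agt Atm → Formula Agt Atm → Formula Agt Atm
  | box : Agt → Formula Agt Atm → Formula Agt Atm
  | ca  : Agt → Formula Agt Atm → Formula Agt Atm
  | cr  : Agt → Formula Agt Atm → Formula Agt Atm
  | ra  : Agt → Formula Agt Atm → Formula Agt Atm
  | rr  : Agt → Formula Agt Atm → Formula Agt Atm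

/-- Material implication in L. -/
def Formula.impF {Agt Atm : Type} (f g : Formula Agt Atm) : Formula Agt Atm :=
  .neg (.and f (.neg g))

/-- Biconditional in L. -/
def Formula.iffF {Agt Atm : Type} (f g : Formula Agt Atm) : Formula Agt Atm :=
  .and (f.impF g) (g.impF f)

/-- Disjunction in L: φ ∨ ψ := ¬(¬φ ∧ ¬ψ). -/
def Formula.orF {Agt Atm : Type} (f g : Formula Agt Atm) : Formula Agt Atm :=
  .neg (.and (.neg f) (.neg g))

/-- Truth of an L formula at a state S relative to a context U. -/
def sat {Agt Atm : Type} (rew pun : Agt → Atm) (U : Set (State Agt Atm)) :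
    State Agt Atm → Formula Agt Atm → Prop
  | S, .emb a   => sat0 S a
  | S, .neg f   => ¬ sat rew pun U S f
  | S, .and f g => sat rew pun U S f ∧ sat rew pun U S g
  | S, .box i f => ∀ S' ∈ U, epi i S S' → sat rew pun U S' f
  | S, .ca i f  => ∀ S' ∈ U, sat rew pun U S' f → attr rew i S S'
  | S, .cr i f  => ∀ S' ∈ U, sat rew pun U S' f → repu pun i S S'
  | S, .ra i f  => ∀ S' ∈ U, sat rew pun U S' f → epi i S S' → attr rew i S S'
  | S, .rr i f  => ∀ S' ∈ U, sat rew pun U S' f → epi i S S' → repu pun i S S'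

/-- Validity: truth at every model (S,U) with S ∈ U. -/
def valid {Agt Atm : Type} (rew pun : Agt → Atm) (f : Formula Agt Atm) : Prop :=
  ∀ (U : Set (State Agt Atm)) (S : State Agt Atm), S ∈ U → sat rew pun U S f

/-- Validity of axiom A10: RA(i)φ → Box(i)(φ → rew(i)) is valid. -/
theorem valid_A10 {Agt Atm : Type} [Fintype Agt] [Countable Atm] [Infinite Atm]
    (rew pun : Agt → Atm)
    (hrew : Function.Injective rew) (hpun : Function.Injective pun)
    (hdistinct : ∀ i j : Agt, rew i ≠ pun j)
    (i : Agt) (φ : Formula Agt Atm) :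
    valid rew pun
      ((Formula.ra i φ).impF (.box i (φ.impF (.emb (.atom (rew i)))))) := by
  intro U S _
  simp only [valid, Formula.impF, sat, L0.impl, sat0, not_and, not_forall, not_not]
  intro hra h
  obtain ⟨S', hS', hepi, hφ, hrw⟩ := h
  obtain ⟨a, hmem, ha⟩ := hra S' hS' hφ hepi
  have := hepi _ hmem
  simp only [L0.impl, sat0] at this
  exact this ⟨ha, hrw⟩
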